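/- The load-balancing two-sided facility location game is not a basic utility system: there exists an instance (two mutually adjacent unit-weight clients, each hosting one facility) where removing a facility does not change the coverage welfare, yet the removed facility's equilibrium load is 1 > 0; hence the equality α_p(A) = γ(A) − γ(A ⊖ p) fails. -/
import Mathlib


open Finset

/-- Load of facility `j` under weight distribution `σ`. -/
def load {n k : ℕ} (σ : Fin n → Fin k → ℝ) (j : Fin k) : ℝ := ∑ i, σ i j

/-- A feasible client weight distribution: nonnegative, supported on accessible
facilities, and clients with a nonempty accessible set distribute their full weight. -/
def Feasible {n k : ℕ} (w : Fin n → ℝ) (N : Fin n → Finset (Fin k))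
    (σ : Fin n → Fin k → ℝ) : Prop :=
  (∀ i j, 0 ≤ σ i j) ∧
  (∀ i j, j ∉ N i → σ i j = 0) ∧
  (∀ i, (N i).Nonempty → ∑ j ∈ N i, σ i j = w i)

/-- Client equilibrium: no client puts positive weight on a facility while a
strictly less loaded accessible facility exists. -/
def ClientEq {n k : ℕ} (w : Fin n → ℝ) (N : Fin n → Finset (Fin k))
    (σ : Fin n → Fin k → ℝ) : Prop :=
  Feasible w N σ ∧
  ∀ i : Fin n, ∀ j ∈ N i, ∀ j' ∈ N i, 0 < σ i j → load σ j ≤ load σ j'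

/-- Facilities accessible to client `i` under placement `s`. -/
def NsF {n k : ℕ} (E : Fin n → Fin n → Bool) (s : Fin k → Fin n) (i : Fin n) :
    Finset (Fin k) :=
  Finset.univ.filter (fun j => s j = i ∨ E i (s j) = true)

/-- Weighted participation rate: total weight of clients covered by `s`. -/
def Wrate {n k : ℕ} (w : Fin n → ℕ) (E : Fin n → Fin n → Bool)
    (s : Fin k → Fin n) : ℕ :=
  ∑ i ∈ Finset.univ.filter (fun i => (NsF E s i).Nonempty), w i

/-- Total weight of clients still covered after removing facility `p`. -/
def WrateMinus {n k : ℕ} (w : Fin n → ℕ) (E : Fin n → Fin n → Bool)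
    (s : Fin k → Fin n) (p : Fin k) : ℕ :=
  ∑ i ∈ Finset.univ.filter (fun i => ∃ j : Fin k, j ≠ p ∧ (s j = i ∨ E i (s j) = true)), w i

/-- Not a basic utility system: in the two-client, two-facility instance with
mutually adjacent unit-weight clients and facilities on both vertices, removing
facility `0` does not change the coverage welfare, yet its equilibrium load is
`1 ≠ 0`, so utility does not equal marginal welfare contribution. -/
theorem not_basic_utility_system :
    ∀ σ : Fin 2 → Fin 2 → ℝ,
      ClientEq (fun _ => (1 : ℝ))
        (NsF (fun i j => decide (i ≠ j)) (id : Fin 2 → Fin 2)) σ →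
      load σ 0 = 1 ∧
      Wrate (fun _ => 1) (fun i j => decide (i ≠ j)) (id : Fin 2 → Fin 2) = 2 ∧
      WrateMinus (fun _ => 1) (fun i j => decide (i ≠ j)) (id : Fin 2 → Fin 2) 0 = 2 ∧
      load σ 0 ≠
        ((Wrate (fun _ => 1) (fun i j => decide (i ≠ j)) (id : Fin 2 → Fin 2) : ℝ) -
          (WrateMinus (fun _ => 1) (fun i j => decide (i ≠ j)) (id : Fin 2 → Fin 2) 0 : ℝ)) := by
  intro σ hce
  obtain ⟨⟨hnn, _, hsum⟩, heq⟩ := hce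
  have hN : ∀ i : Fin 2, NsF (fun i j : Fin 2 => decide (i ≠ j)) id i = Finset.univ := by
    decide
  have hrow : ∀ i : Fin 2, σ i 0 + σ i 1 = 1 := by
    intro i
    have := hsum i (by rw [hN]; exact Finset.univ_nonempty)
    rw [hN] at this
    simpa [Fin.sum_univ_two] using this
  have htot : load σ 0 + load σ 1 = 2 := by
    have h0 := hrow 0
    have h1 := hrow 1
    simp only [load, Fin.sum_univ_two]
    linarith
  have hload : load σ 0 = 1 := by
    rcases lt_trichotomy (load σ 0) (load σ 1) with h | h | h
    · -- load 1 > 1 > 0, so some σ i 1 > 0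
      have h1pos : 0 < load σ 1 := by linarith
      have : 0 < σ 0 1 ∨ 0 < σ 1 1 := by
        by_contra hc
        push_neg at hc
        have e0 : σ 0 1 = 0 := le_antisymm hc.1 (hnn 0 1)
        have e1 : σ 1 1 = 0 := le_antisymm hc.2 (hnn 1 1)
        simp only [load, Fin.sum_univ_two, e0, e1] at h1pos
        linarith
      rcases this with hp | hp
      · have := heq 0 1 (by rw [hN]; exact Finset.mem_univ _) 0
          (by rw [hN]; exact Finset.mem_univ _) hp
        linarith
      · have := heq 1 1 (by rw [hN]; exact Finset.mem_univ _) 0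
          (by rw [hN]; exact Finset.mem_univ _) hp
        linarith
    · linarith
    · have h0pos : 0 < load σ 0 := by linarith
      have : 0 < σ 0 0 ∨ 0 < σ 1 0 := by
        by_contra hc
        push_neg at hc
        have e0 : σ 0 0 = 0 := le_antisymm hc.1 (hnn 0 0)
        have e1 : σ 1 0 = 0 := le_antisymm hc.2 (hnn 1 0)
        simp only [load, Fin.sum_univ_two, e0, e1] at h0pos
        linarith
      rcases this with hp | hp
      · have := heq 0 0 (by rw [hN]; exact Finset.mem_univ _) 1
          (by rw [hN]; exact Finset.mem_univ _) hp
        linarith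
      · have := heq 1 0 (by rw [hN]; exact Finset.mem_univ _) 1
          (by rw [hN]; exact Finset.mem_univ _) hp
        linarith
  have hW : Wrate (fun _ => 1) (fun i j : Fin 2 => decide (i ≠ j)) id = 2 := by decide
  have hWM : WrateMinus (fun _ => 1) (fun i j : Fin 2 => decide (i ≠ j)) id 0 = 2 := by decide
  refine ⟨hload, hW, hWM, ?_⟩
  rw [hload, hW, hWM]
  norm_num
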